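/- Let n ≥ 2 and let F be a facet of Δ(n) all of whose vertices satisfy the B-condition in F (a homology facet). Then exactly one of the following holds: (a) the last (componentwise largest) vertex of F has some coordinate strictly less than n; or (b) (n,n,n) ∈ F, the set G = F \ {(n,n,n)} is a facet of Δ(n-1) all of whose vertices satisfy the B-condition in G, and the last vertex of G has some coordinate strictly less than n-1. Conversely, every set F of the form described in (b) is a facet of Δ(n) all of whose vertices satisfy the B-condition. -/

import Mathlib

/-- Vertices of `Δ(n)`: integer triples. -/
abbrev V : Type := ℕ × ℕ × ℕ

/-- The strict componentwise order on triples. -/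
def slt (u v : V) : Prop := u.1 < v.1 ∧ u.2.1 < v.2.1 ∧ u.2.2 < v.2.2

/-- A face of `Δ(n)`: a finite subset of `{1,…,n}³` that is a chain under `slt`. -/
def IsFace (n : ℕ) (F : Finset V) : Prop :=
  (∀ v ∈ F, v.1 ∈ Finset.Icc 1 n ∧ v.2.1 ∈ Finset.Icc 1 n ∧ v.2.2 ∈ Finset.Icc 1 n) ∧
  (∀ u ∈ F, ∀ v ∈ F, u ≠ v → slt u v ∨ slt v u)

/-- A facet of `Δ(n)`: an inclusion-maximal face. -/
def IsFacet (n : ℕ) (F : Finset V) : Prop :=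
  IsFace n F ∧ ∀ G : Finset V, IsFace n G → F ⊆ G → F = G

/-- The `ℓ`-th vertex of the (increasingly sorted) list `L` satisfies the B-condition. -/
def BCond (L : List V) (ℓ : ℕ) (h : ℓ < L.length) : Prop :=
  (ℓ = 0 ∧ (1 < (L.get ⟨ℓ, h⟩).1 ∨ 1 < (L.get ⟨ℓ, h⟩).2.1 ∨ 1 < (L.get ⟨ℓ, h⟩).2.2)) ∨
  (0 < ℓ ∧
    (1 < (L.get ⟨ℓ, h⟩).1 - (L.get ⟨ℓ - 1, by omega⟩).1 ∨
     1 < (L.get ⟨ℓ, h⟩).2.1 - (L.get ⟨ℓ - 1, by omega⟩).2.1 ∨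
     1 < (L.get ⟨ℓ, h⟩).2.2 - (L.get ⟨ℓ - 1, by omega⟩).2.2))

/-- `F` is a homology facet of `Δ(n)`: a facet all of whose vertices satisfy the
B-condition (with respect to the unique increasing listing of `F`). -/
def HomFacet (n : ℕ) (F : Finset V) : Prop :=
  IsFacet n F ∧ ∀ L : List V, L.Chain' slt → L.toFinset = F →
    ∀ ℓ : ℕ, ∀ h : ℓ < L.length, BCond L ℓ h

/-- The last (componentwise largest) vertex of `F` has some coordinate `< n`. -/
def LastCoordLt (n : ℕ) (F : Finset V) : Prop :=
  ∃ v ∈ F, (∀ u ∈ F, u ≠ v → slt u v) ∧ (v.1 < n ∨ v.2.1 < n ∨ v.2.2 < n)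

/-- Alternative (b): `(n,n,n) ∈ F`, `F \ {(n,n,n)}` is a homology facet of `Δ(n-1)` whose
last vertex has some coordinate `< n-1`. -/
def CondB (n : ℕ) (F : Finset V) : Prop :=
  ((n, n, n) : V) ∈ F ∧ HomFacet (n - 1) (F.erase ((n, n, n) : V)) ∧
    LastCoordLt (n - 1) (F.erase ((n, n, n) : V))

lemma slt_trans' {u v w : V} (h1 : slt u v) (h2 : slt v w) : slt u w :=
  ⟨h1.1.trans h2.1, h1.2.1.trans h2.2.1, h1.2.2.trans h2.2.2⟩

instance : IsTrans V slt := ⟨fun _ _ _ => slt_trans'⟩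

lemma slt_irrefl' (u : V) : ¬ slt u u := fun h => lt_irrefl _ h.1

lemma slt_asymm' {u v : V} (h : slt u v) : ¬ slt v u :=
  fun h' => slt_irrefl' u (slt_trans' h h')

lemma slt_ne {u v : V} (h : slt u v) : u ≠ v := fun e => slt_irrefl' v (e ▸ h)

lemma chain_pairwise {L : List V} (h : L.Chain' slt) : L.Pairwise slt :=
  List.isChain_iff_pairwise.mp h

lemma chain_nodup {L : List V} (h : L.Chain' slt) : L.Nodup :=
  (chain_pairwise h).imp slt_ne

lemma exists_max {F : Finset V} (hne : F.Nonempty)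
    (hch : ∀ u ∈ F, ∀ v ∈ F, u ≠ v → slt u v ∨ slt v u) :
    ∃ v ∈ F, ∀ u ∈ F, u ≠ v → slt u v := by
  obtain ⟨v, hv, hmax⟩ := F.exists_max_image (fun u => u.1) hne
  refine ⟨v, hv, fun u hu hne' => ?_⟩
  rcases hch u hu v hv hne' with h | h
  · exact h
  · exact absurd (hmax u hu) (not_le.2 h.1)

lemma max_unique {F : Finset V} {v w : V} (hv : v ∈ F) (hw : w ∈ F)
    (hv' : ∀ u ∈ F, u ≠ v → slt u v) (hw' : ∀ u ∈ F, u ≠ w → slt u w) : v = w := by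
  by_contra h
  exact slt_asymm' (hw' v hv h) (hv' w hw (Ne.symm h))

lemma exists_chain_list (F : Finset V)
    (hch : ∀ u ∈ F, ∀ v ∈ F, u ≠ v → slt u v ∨ slt v u) :
    ∃ L : List V, L.Chain' slt ∧ L.toFinset = F := by
  induction F using Finset.strongInduction with
  | _ F ih =>
    rcases F.eq_empty_or_nonempty with rfl | hne
    · exact ⟨[], List.isChain_nil, rfl⟩
    · obtain ⟨v, hv, hmax⟩ := exists_max hne (fun u hu w hw h => hch u hu w hw h)
      obtain ⟨L, hL, hLF⟩ := ih (F.erase v) (Finset.erase_ssubset hv)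
        (fun u hu w hw h => hch u (Finset.mem_of_mem_erase hu) w (Finset.mem_of_mem_erase hw) h)
      refine ⟨L ++ [v], ?_, ?_⟩
      · unfold List.Chain'; rw [List.isChain_append]
        refine ⟨hL, List.isChain_singleton v, fun x hx y hy => ?_⟩
        have hxL : x ∈ L := List.mem_of_mem_getLast? hx
        have hy' : y = v := by simpa [eq_comm] using hy
        rw [hy']
        have hxG : x ∈ F.erase v := by rw [← hLF]; exact List.mem_toFinset.mpr hxL
        exact hmax x (Finset.mem_of_mem_erase hxG) (Finset.ne_of_mem_erase hxG)
      · rw [List.toFinset_append, hLF]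
        have : ([v] : List V).toFinset = {v} := by simp
        rw [this, Finset.union_comm, ← Finset.insert_eq, Finset.insert_erase hv]

lemma last_is_max {L : List V} (hL : L.Chain' slt) (hne : L ≠ [])
    {F : Finset V} (hLF : L.toFinset = F) :
    L.getLast hne ∈ F ∧ ∀ u ∈ F, u ≠ L.getLast hne → slt u (L.getLast hne) := by
  have hlast_mem : L.getLast hne ∈ L := List.getLast_mem hne
  refine ⟨by rw [← hLF]; exact List.mem_toFinset.mpr hlast_mem, fun u hu hneu => ?_⟩
  have huL : u ∈ L := by rw [← hLF] at hu; exact List.mem_toFinset.mp hu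
  obtain ⟨i, hi, rfl⟩ := List.mem_iff_getElem.mp huL
  have hlen : 0 < L.length := List.length_pos_iff.mpr hne
  have hgl : L.getLast hne = L[L.length - 1] := List.getLast_eq_getElem hne
  have hine : i ≠ L.length - 1 := by
    intro e
    apply hneu
    rw [hgl]
    congr 1
  have hlt : i < L.length - 1 := by omega
  rw [hgl]
  exact List.pairwise_iff_getElem.mp (chain_pairwise hL) i (L.length-1) hi (by omega) hlt

lemma bounds {n : ℕ} {F : Finset V} (hF : IsFace n F) {u : V} (hu : u ∈ F) :
    1 ≤ u.1 ∧ u.1 ≤ n ∧ 1 ≤ u.2.1 ∧ u.2.1 ≤ n ∧ 1 ≤ u.2.2 ∧ u.2.2 ≤ n := by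
  obtain ⟨h1, h2, h3⟩ := hF.1 u hu
  simp only [Finset.mem_Icc] at h1 h2 h3
  exact ⟨h1.1, h1.2, h2.1, h2.2, h3.1, h3.2⟩

lemma nnn_max {n : ℕ} {F : Finset V} (hF : IsFace n F) (hnnn : ((n,n,n):V) ∈ F) :
    ∀ u ∈ F, u ≠ ((n,n,n):V) → slt u ((n,n,n):V) := by
  intro u hu hne
  rcases hF.2 u hu _ hnnn hne with h | h
  · exact h
  · exact absurd (bounds hF hu).2.1 (not_le.2 h.1)

lemma slt_to_nnn {n : ℕ} {u : V} (h1 : u.1 < n) (h2 : u.2.1 < n) (h3 : u.2.2 < n) :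
    slt u ((n,n,n):V) := ⟨h1, h2, h3⟩

lemma slt_mk_mk {a b c d e f : ℕ} (h1 : a < d) (h2 : b < e) (h3 : c < f) :
    slt ((a,b,c):V) ((d,e,f):V) := ⟨h1, h2, h3⟩

/-- Lemma 7.2: the homology facets of `Δ(n)` split into two disjoint families,
`X` (last vertex has a coordinate `< n`) and `Y` (obtained from a member of the family
`X` for `Δ(n-1)` by adjoining `(n,n,n)`); conversely every set of the second form is
a homology facet of `Δ(n)`. -/
theorem homology_facets_decomposition (n : ℕ) (hn : 2 ≤ n) :
    ∀ F : Finset V,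
      (HomFacet n F → (LastCoordLt n F ∨ CondB n F) ∧ ¬(LastCoordLt n F ∧ CondB n F)) ∧
      (CondB n F → HomFacet n F) := by
  intro F
  constructor
  · intro hF
    obtain ⟨⟨hFace, hMaxl⟩, hB⟩ := hF
    constructor
    · -- main alternative
      have hne : F.Nonempty := by
        rcases F.eq_empty_or_nonempty with he | h
        · exfalso
          have hface1 : IsFace n ({((1:ℕ),(1:ℕ),(1:ℕ))} : Finset V) := by
            constructor
            · intro v hv
              simp only [Finset.mem_singleton] at hv
              subst hv
              refine ⟨?_, ?_, ?_⟩ <;> simp [Finset.mem_Icc] <;> omega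
            · intro u hu v hv huv
              simp only [Finset.mem_singleton] at hu hv
              subst hu; subst hv; exact absurd rfl huv
          have := hMaxl _ hface1 (he ▸ Finset.empty_subset _)
          rw [he] at this
          exact (Finset.singleton_ne_empty _) this.symm
        · exact h
      obtain ⟨v, hv, hmaxv⟩ := exists_max hne hFace.2
      by_cases hcoord : v.1 < n ∨ v.2.1 < n ∨ v.2.2 < n
      · exact Or.inl ⟨v, hv, hmaxv, hcoord⟩
      · right
        push_neg at hcoord
        have hbv := bounds hFace hv
        have hveq : v = ((n,n,n):V) := by
          have e1 : v.1 = n := by omega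
          have e2 : v.2.1 = n := by omega
          have e3 : v.2.2 = n := by omega
          exact Prod.ext e1 (Prod.ext e2 e3)
        subst hveq
        have hnnnF : ((n,n,n):V) ∈ F := hv
        have hGmem : ∀ u ∈ F.erase ((n,n,n):V), u ∈ F ∧ u ≠ ((n,n,n):V) :=
          fun u hu => ⟨Finset.mem_of_mem_erase hu, Finset.ne_of_mem_erase hu⟩
        have hGslt : ∀ u ∈ F.erase ((n,n,n):V), slt u ((n,n,n):V) :=
          fun u hu => hmaxv u (hGmem u hu).1 (hGmem u hu).2
        have hGface : IsFace (n-1) (F.erase ((n,n,n):V)) := by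
          constructor
          · intro u hu
            have hb := bounds hFace (hGmem u hu).1
            obtain ⟨s1, s2, s3⟩ := hGslt u hu
            have s1' : u.1 < n := s1
            have s2' : u.2.1 < n := s2
            have s3' : u.2.2 < n := s3
            simp only [Finset.mem_Icc]
            exact ⟨⟨by omega, by omega⟩, ⟨by omega, by omega⟩, ⟨by omega, by omega⟩⟩
          · intro u hu w hw h
            exact hFace.2 u (hGmem u hu).1 w (hGmem w hw).1 h
        have hGne : (F.erase ((n,n,n):V)).Nonempty := by
          by_contra hGe
          rw [Finset.not_nonempty_iff_eq_empty] at hGe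
          have hHface : IsFace n ({((1:ℕ),(1:ℕ),(1:ℕ)), ((n,n,n):V)} : Finset V) := by
            constructor
            · intro u hu
              simp only [Finset.mem_insert, Finset.mem_singleton] at hu
              rcases hu with rfl | rfl <;>
                (refine ⟨?_, ?_, ?_⟩ <;> simp [Finset.mem_Icc] <;> omega)
            · intro u hu w hw h
              simp only [Finset.mem_insert, Finset.mem_singleton] at hu hw
              rcases hu with rfl | rfl <;> rcases hw with rfl | rfl
              · exact absurd rfl h
              · exact Or.inl (slt_mk_mk (by omega) (by omega) (by omega))
              · exact Or.inr (slt_mk_mk (by omega) (by omega) (by omega))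
              · exact absurd rfl h
          have hFsub : F ⊆ {((1:ℕ),(1:ℕ),(1:ℕ)), ((n,n,n):V)} := by
            intro u hu
            rcases eq_or_ne u ((n,n,n):V) with rfl | h
            · simp
            · exfalso
              have : u ∈ F.erase ((n,n,n):V) := Finset.mem_erase.mpr ⟨h, hu⟩
              rw [hGe] at this
              simp at this
          have hFH := hMaxl _ hHface hFsub
          have h111 : ((1:ℕ),(1:ℕ),(1:ℕ)) ∈ F := by rw [hFH]; simp
          have : ((1:ℕ),(1:ℕ),(1:ℕ)) ∈ F.erase ((n,n,n):V) := by
            refine Finset.mem_erase.mpr ⟨?_, h111⟩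
            intro e
            have := congrArg Prod.fst e
            simp at this
            omega
          rw [hGe] at this
          simp at this
        have hGfacet : IsFacet (n-1) (F.erase ((n,n,n):V)) := by
          refine ⟨hGface, fun H hHface hGH => ?_⟩
          have hsltH : ∀ x ∈ H, slt x ((n,n,n):V) := by
            intro x hx
            have hb := bounds hHface hx
            exact slt_to_nnn (by omega) (by omega) (by omega)
          have hH' : IsFace n (insert ((n,n,n):V) H) := by
            constructor
            · intro u hu
              rcases Finset.mem_insert.mp hu with rfl | hu'
              · refine ⟨?_, ?_, ?_⟩ <;> simp [Finset.mem_Icc] <;> omega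
              · have hb := bounds hHface hu'
                simp only [Finset.mem_Icc]
                exact ⟨⟨by omega, by omega⟩, ⟨by omega, by omega⟩, ⟨by omega, by omega⟩⟩
            · intro u hu w hw h
              rcases Finset.mem_insert.mp hu with rfl | hu' <;>
                rcases Finset.mem_insert.mp hw with rfl | hw'
              · exact absurd rfl h
              · exact Or.inr (hsltH w hw')
              · exact Or.inl (hsltH u hu')
              · exact hHface.2 u hu' w hw' h
          have hFsub : F ⊆ insert ((n,n,n):V) H := by
            intro u hu
            rcases eq_or_ne u ((n,n,n):V) with rfl | h
            · exact Finset.mem_insert_self _ _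
            · exact Finset.mem_insert_of_mem (hGH (Finset.mem_erase.mpr ⟨h, hu⟩))
          have hFeq := hMaxl _ hH' hFsub
          apply Finset.Subset.antisymm hGH
          intro u hu
          have huF : u ∈ F := by rw [hFeq]; exact Finset.mem_insert_of_mem hu
          refine Finset.mem_erase.mpr ⟨?_, huF⟩
          intro e
          have := (hsltH u hu).1
          rw [e] at this
          simp at this
        have hGB : ∀ L : List V, L.Chain' slt → L.toFinset = F.erase ((n,n,n):V) →
            ∀ ℓ : ℕ, ∀ h : ℓ < L.length, BCond L ℓ h := by
          intro L hLc hLG ℓ hℓ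
          have hchain' : (L ++ [((n,n,n):V)]).Chain' slt := by
            unfold List.Chain'; rw [List.isChain_append]
            refine ⟨hLc, List.isChain_singleton _, fun x hx y hy => ?_⟩
            have hxL : x ∈ L := List.mem_of_mem_getLast? hx
            have hy' : y = ((n,n,n):V) := by simpa [eq_comm] using hy
            rw [hy']
            exact hGslt x (by rw [← hLG]; exact List.mem_toFinset.mpr hxL)
          have htf : (L ++ [((n,n,n):V)]).toFinset = F := by
            rw [List.toFinset_append, hLG]
            have h1 : ([((n,n,n):V)]).toFinset = {((n,n,n):V)} := by simp
            rw [h1, Finset.union_comm, ← Finset.insert_eq, Finset.insert_erase hnnnF]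
          have key := hB _ hchain' htf ℓ (by simp; omega)
          unfold BCond at key ⊢
          simp only [List.get_eq_getElem] at key ⊢
          rw [List.getElem_append_left hℓ,
            List.getElem_append_left (show ℓ - 1 < L.length by omega)] at key
          exact key
        obtain ⟨M, hMc, hMF⟩ := exists_chain_list F hFace.2
        have hMne : M ≠ [] := by
          intro e
          rw [e] at hMF
          simp only [List.toFinset_nil] at hMF
          rw [← hMF] at hne
          simp at hne
        have hnodup : M.Nodup := chain_nodup hMc
        have hcard : M.length = F.card := by
          rw [← hMF]; exact (List.toFinset_card_of_nodup hnodup).symm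
        obtain ⟨w0, hw0⟩ := hGne
        have h2card : 2 ≤ F.card :=
          Finset.one_lt_card.mpr ⟨w0, (hGmem w0 hw0).1, ((n,n,n):V), hnnnF, (hGmem w0 hw0).2⟩
        have hlen2 : 2 ≤ M.length := by omega
        have hlastmax := last_is_max hMc hMne hMF
        have hlast_eq : M.getLast hMne = ((n,n,n):V) :=
          max_unique hlastmax.1 hnnnF hlastmax.2 hmaxv
        have hgl : M.getLast hMne = M[M.length - 1]'(by omega) :=
          List.getLast_eq_getElem hMne
        have hlv : M[M.length - 1]'(by omega) = ((n,n,n):V) := by rw [← hgl]; exact hlast_eq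
        have key := hB M hMc hMF (M.length - 1) (by omega)
        unfold BCond at key
        simp only [List.get_eq_getElem] at key
        rcases key with ⟨h0, _⟩ | ⟨_, hgap⟩
        · omega
        have hidx : M.length - 1 - 1 < M.length := by omega
        have hwcoord : (M[M.length-1-1]'hidx).1 < n - 1 ∨
            (M[M.length-1-1]'hidx).2.1 < n - 1 ∨ (M[M.length-1-1]'hidx).2.2 < n - 1 := by
          rw [hlv] at hgap
          rcases hgap with h | h | h
          · left
            have h' : 1 < n - (M[M.length-1-1]'hidx).1 := h
            omega
          · right; left
            have h' : 1 < n - (M[M.length-1-1]'hidx).2.1 := h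
            omega
          · right; right
            have h' : 1 < n - (M[M.length-1-1]'hidx).2.2 := h
            omega
        have hwM : M[M.length-1-1]'hidx ∈ M := List.getElem_mem _
        have hwF : M[M.length-1-1]'hidx ∈ F := by
          rw [← hMF]; exact List.mem_toFinset.mpr hwM
        have hwslt : slt (M[M.length-1-1]'hidx) ((n,n,n):V) := by
          rw [← hlv]
          exact List.pairwise_iff_getElem.mp (chain_pairwise hMc) _ _ hidx (by omega) (by omega)
        have hwG : M[M.length-1-1]'hidx ∈ F.erase ((n,n,n):V) :=
          Finset.mem_erase.mpr ⟨slt_ne hwslt, hwF⟩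
        have hwmax : ∀ u ∈ F.erase ((n,n,n):V), u ≠ M[M.length-1-1]'hidx →
            slt u (M[M.length-1-1]'hidx) := by
          intro u hu hneu
          have huF := (hGmem u hu).1
          have huM : u ∈ M := by rw [← hMF] at huF; exact List.mem_toFinset.mp huF
          obtain ⟨i, hi, rfl⟩ := List.mem_iff_getElem.mp huM
          have hi1 : i ≠ M.length - 1 := by
            intro e
            subst e
            exact (hGmem _ hu).2 hlv
          have hi2 : i ≠ M.length - 1 - 1 := by
            intro e
            subst e
            exact hneu rfl
          exact List.pairwise_iff_getElem.mp (chain_pairwise hMc) i _ hi hidx (by omega)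
        exact ⟨hnnnF, ⟨hGfacet, hGB⟩, ⟨M[M.length-1-1]'hidx, hwG, hwmax, hwcoord⟩⟩
    · -- disjointness
      rintro ⟨⟨v, hv, hmaxv, hcoord⟩, hnnnF, -, -⟩
      rcases eq_or_ne v ((n,n,n):V) with rfl | h
      · rcases hcoord with h | h | h <;> exact absurd h (by simp)
      · have hs := hmaxv _ hnnnF (Ne.symm h)
        have hb := bounds hFace hv
        have : n < v.1 := hs.1
        omega
  · -- CondB → HomFacet
    rintro ⟨hnnnF, ⟨⟨hGface, hGmaxl⟩, hGB⟩, w, hwG, hwmax, hwcoord⟩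
    have hsltG : ∀ u ∈ F.erase ((n,n,n):V), slt u ((n,n,n):V) := by
      intro u hu
      have hb := bounds hGface hu
      exact slt_to_nnn (by omega) (by omega) (by omega)
    have hFface : IsFace n F := by
      constructor
      · intro u hu
        rcases eq_or_ne u ((n,n,n):V) with rfl | h
        · refine ⟨?_, ?_, ?_⟩ <;> simp [Finset.mem_Icc] <;> omega
        · have hb := bounds hGface (Finset.mem_erase.mpr ⟨h, hu⟩)
          simp only [Finset.mem_Icc]
          exact ⟨⟨by omega, by omega⟩, ⟨by omega, by omega⟩, ⟨by omega, by omega⟩⟩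
      · intro u hu v hv huv
        rcases eq_or_ne u ((n,n,n):V) with rfl | h1 <;>
          rcases eq_or_ne v ((n,n,n):V) with rfl | h2
        · exact absurd rfl huv
        · exact Or.inr (hsltG v (Finset.mem_erase.mpr ⟨h2, hv⟩))
        · exact Or.inl (hsltG u (Finset.mem_erase.mpr ⟨h1, hu⟩))
        · exact hGface.2 u (Finset.mem_erase.mpr ⟨h1, hu⟩) v (Finset.mem_erase.mpr ⟨h2, hv⟩) huv
    have hmaxF : ∀ u ∈ F, u ≠ ((n,n,n):V) → slt u ((n,n,n):V) := nnn_max hFface hnnnF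
    have hFfacet : IsFacet n F := by
      refine ⟨hFface, fun H hHface hFH => ?_⟩
      have hnnnH : ((n,n,n):V) ∈ H := hFH hnnnF
      have hsltH := nnn_max hHface hnnnH
      have hHGface : IsFace (n-1) (H.erase ((n,n,n):V)) := by
        constructor
        · intro u hu
          obtain ⟨s1, s2, s3⟩ := hsltH u (Finset.mem_of_mem_erase hu) (Finset.ne_of_mem_erase hu)
          have s1' : u.1 < n := s1
          have s2' : u.2.1 < n := s2
          have s3' : u.2.2 < n := s3
          have hb := bounds hHface (Finset.mem_of_mem_erase hu)
          simp only [Finset.mem_Icc]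
          exact ⟨⟨by omega, by omega⟩, ⟨by omega, by omega⟩, ⟨by omega, by omega⟩⟩
        · intro u hu v hv huv
          exact hHface.2 u (Finset.mem_of_mem_erase hu) v (Finset.mem_of_mem_erase hv) huv
      have hsub : F.erase ((n,n,n):V) ⊆ H.erase ((n,n,n):V) := fun u hu =>
        Finset.mem_erase.mpr ⟨Finset.ne_of_mem_erase hu, hFH (Finset.mem_of_mem_erase hu)⟩
      have hGeq := hGmaxl _ hHGface hsub
      apply Finset.Subset.antisymm hFH
      intro u hu
      rcases eq_or_ne u ((n,n,n):V) with rfl | h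
      · exact hnnnF
      · have : u ∈ F.erase ((n,n,n):V) := by
          rw [hGeq]; exact Finset.mem_erase.mpr ⟨h, hu⟩
        exact Finset.mem_of_mem_erase this
    refine ⟨hFfacet, ?_⟩
    intro L hLc hLF ℓ hℓ
    have hLne : L ≠ [] := by
      intro e
      rw [e] at hLF
      simp only [List.toFinset_nil] at hLF
      rw [← hLF] at hnnnF
      simp at hnnnF
    have hlastmax := last_is_max hLc hLne hLF
    have hlast_eq : L.getLast hLne = ((n,n,n):V) :=
      max_unique hlastmax.1 hnnnF hlastmax.2 hmaxF
    obtain ⟨D, rfl⟩ : ∃ D, L = D ++ [((n,n,n):V)] := by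
      refine ⟨L.dropLast, ?_⟩
      conv_lhs => rw [← List.dropLast_append_getLast hLne]
      rw [hlast_eq]
    have hDc : D.Chain' slt := hLc.prefix ⟨[((n,n,n):V)], rfl⟩
    have hnodup := chain_nodup hLc
    have hnnnD : ((n,n,n):V) ∉ D := by
      rw [List.nodup_append] at hnodup
      intro h
      exact hnodup.2.2 _ h _ (by simp) rfl
    have hDt : D.toFinset = F.erase ((n,n,n):V) := by
      ext a
      simp only [List.mem_toFinset, Finset.mem_erase]
      constructor
      · intro ha
        refine ⟨?_, ?_⟩
        · intro e; rw [e] at ha; exact hnnnD ha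
        · rw [← hLF]; simp [ha]
      · rintro ⟨hne', haF⟩
        rw [← hLF] at haF
        simp only [List.toFinset_append, Finset.mem_union, List.mem_toFinset] at haF
        rcases haF with h | h
        · exact h
        · simp at h
          exact absurd h hne'
    have hDne : D ≠ [] := by
      intro e
      rw [e] at hDt
      simp only [List.toFinset_nil] at hDt
      rw [← hDt] at hwG
      simp at hwG
    have hDpos : 0 < D.length := List.length_pos_iff.mpr hDne
    have hℓ' : ℓ < D.length + 1 := by simpa using hℓ
    rcases lt_or_ge ℓ D.length with hcase | hcase
    · have key := hGB D hDc hDt ℓ hcase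
      unfold BCond at key ⊢
      simp only [List.get_eq_getElem] at key ⊢
      rw [List.getElem_append_left hcase,
        List.getElem_append_left (show ℓ - 1 < D.length by omega)]
      exact key
    · have hℓeq : ℓ = D.length := by omega
      subst hℓeq
      unfold BCond
      simp only [List.get_eq_getElem]
      right
      refine ⟨by omega, ?_⟩
      have e1 : (D ++ [((n,n,n):V)])[D.length]'hℓ = ((n,n,n):V) :=
        List.getElem_concat_length rfl hℓ
      have e2 : (D ++ [((n,n,n):V)])[D.length - 1]'(by omega) = D[D.length - 1]'(by omega) :=
        List.getElem_append_left (by omega)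
      have hDlast : D.getLast hDne = D[D.length - 1]'(by omega) :=
        List.getLast_eq_getElem hDne
      have hDmax := last_is_max hDc hDne hDt
      have hDlast_w : D.getLast hDne = w := max_unique hDmax.1 hwG hDmax.2 hwmax
      have e3 : D[D.length - 1]'(by omega) = w := by rw [← hDlast]; exact hDlast_w
      rw [e1, e2, e3]
      rcases hwcoord with h | h | h
      · left
        show 1 < n - w.1
        omega
      · right; left
        show 1 < n - w.2.1
        omega
      · right; right
        show 1 < n - w.2.2
        omega
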